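/- Let V be a negative definite real quadratic space, E ⊂ V finite, and suppose v ∈ V satisfies ⟨v,w⟩ ≠ 0 for all w ∈ E. Let D = min_{w∈E} dist(v, w^⊥) > 0 (distance with respect to −q). Then |ŝgn_E(v) − sgn_E(v)| ≪ D^{d−2} exp(−4πD²) for D ≥ 1, where d = dim V, i.e., the smoothed sign converges square-exponentially to the sign product away from the walls. -/

import Mathlib

open MeasureTheory Real
noncomputable section
set_option maxHeartbeats 1000000

/-- The bilinear form `⟨v,w⟩ = −⟪v,w⟫` of the negative definite quadratic space
`(ℝ^d, q)` with `q v = −‖v‖²`, realized on Euclidean space. -/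
def negB {d : ℕ} (v w : EuclideanSpace ℝ (Fin d)) : ℝ := -(inner ℝ v w : ℝ)

/-- `sgn_E(v) = ∏_{w ∈ E} sgn⟨v,w⟩`, with `sgn 0 = 0`. -/
def sgnProd {d : ℕ} (E : Finset (EuclideanSpace ℝ (Fin d)))
    (v : EuclideanSpace ℝ (Fin d)) : ℝ :=
  ∏ w ∈ E, Real.sign (negB v w)

/-- The sector `S_E(v)` opposite to `v` with respect to the walls corresponding to `E`. -/
def oppSector {d : ℕ} (E : Finset (EuclideanSpace ℝ (Fin d)))
    (v : EuclideanSpace ℝ (Fin d)) : Set (EuclideanSpace ℝ (Fin d)) :=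
  {v' | ∀ w ∈ E, Real.sign (negB v' w) ≠ Real.sign (negB v w)}

/-- The smoothed volume `vôl_E(v)`; the Gaussian is `exp(4π q(v'−v)) = exp(−4π‖v'−v‖²)`
and the measure is the Lebesgue measure associated with `−q`. -/
def smoothVol {d : ℕ} (E : Finset (EuclideanSpace ℝ (Fin d)))
    (v : EuclideanSpace ℝ (Fin d)) : ℝ :=
  (∫ v' in oppSector E v, Real.exp (-(4 * π) * ‖v' - v‖ ^ 2)) /
    ∫ v' : EuclideanSpace ℝ (Fin d), Real.exp (-(4 * π) * ‖v'‖ ^ 2)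

/-- The smoothed sign `ŝgn_E(v)`, the normalized Gaussian convolution of `sgn_E`. -/
def smoothSgn {d : ℕ} (E : Finset (EuclideanSpace ℝ (Fin d)))
    (v : EuclideanSpace ℝ (Fin d)) : ℝ :=
  (∫ v' : EuclideanSpace ℝ (Fin d), sgnProd E v' * Real.exp (-(4 * π) * ‖v' - v‖ ^ 2)) /
    ∫ v' : EuclideanSpace ℝ (Fin d), Real.exp (-(4 * π) * ‖v'‖ ^ 2)

section AuxiliaryLemmas

open Set Metric

/-- Shorthand for the ambient Euclidean space. -/
local notation "Vd" d => EuclideanSpace ℝ (Fin d)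

lemma SgnTail.measurable_realSign : Measurable Real.sign := by
  have h : Real.sign = fun r : ℝ => if r < 0 then (-1:ℝ) else if 0 < r then 1 else 0 := rfl
  rw [h]
  exact Measurable.ite measurableSet_Iio measurable_const
    (Measurable.ite (measurableSet_Ioi (a := (0:ℝ))) measurable_const measurable_const)

lemma SgnTail.abs_realSign_le_one (r : ℝ) : |Real.sign r| ≤ 1 := by
  rcases Real.sign_apply_eq r with h | h | h <;> rw [h] <;> norm_num

lemma SgnTail.abs_sgnProd_le_one {d : ℕ} (E : Finset (Vd d)) (v : Vd d) :
    |sgnProd E v| ≤ 1 := by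
  rw [sgnProd, Finset.abs_prod]
  exact Finset.prod_le_one (fun w _ => abs_nonneg _)
    (fun w _ => SgnTail.abs_realSign_le_one _)

lemma SgnTail.measurable_sgnProd {d : ℕ} (E : Finset (Vd d)) :
    Measurable (sgnProd E) := by
  unfold sgnProd
  refine Finset.measurable_prod _ fun w _ => ?_
  refine SgnTail.measurable_realSign.comp ?_
  have h : Continuous fun v : Vd d => negB v w := by
    unfold negB
    exact (continuous_id.inner continuous_const).neg
  exact h.measurable

lemma SgnTail.integrable_gauss (d : ℕ) :
    Integrable (fun u : Vd d => rexp (-(4*π) * ‖u‖^2)) := by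
  have h4 : (0:ℝ) < 4 * π := by positivity
  have h := (GaussianFourier.integrable_cexp_neg_mul_sq_norm_add
    (V := Vd d) (b := ((4*π : ℝ) : ℂ)) (by simpa using h4) 0 0).norm
  refine h.congr (Filter.Eventually.of_forall fun u => ?_)
  simp only [Complex.norm_exp]
  norm_num [← Complex.ofReal_pow, ← Complex.ofReal_mul]

lemma SgnTail.gauss_integral_pos (d : ℕ) :
    0 < ∫ u : Vd d, rexp (-(4*π) * ‖u‖^2) := by
  have h4 : (0:ℝ) < 4 * π := by positivity
  rw [GaussianFourier.integral_rexp_neg_mul_sq_norm h4]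
  positivity

lemma SgnTail.sign_eq_of_close {d : ℕ} {w v v' : Vd d} (hw : negB v w ≠ 0)
    (h : ‖v' - v‖ < infDist v {u : Vd d | negB u w = 0}) :
    Real.sign (negB v' w) = Real.sign (negB v w) := by
  by_contra hne
  set a : ℝ := (inner ℝ v w : ℝ) with ha_def
  set b : ℝ := (inner ℝ v' w : ℝ) with hb_def
  have ha : a ≠ 0 := fun h0 => hw (by simp [negB, ← ha_def, h0])
  have hab : a * b ≤ 0 := by
    rcases ha.lt_or_gt with hlt | hgt
    · rcases lt_trichotomy b 0 with hb | hb | hb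
      · exact absurd (by rw [show negB v' w = -b from rfl, show negB v w = -a from rfl,
          Real.sign_of_pos (by linarith), Real.sign_of_pos (by linarith)]) hne
      · simp [hb]
      · nlinarith
    · rcases lt_trichotomy b 0 with hb | hb | hb
      · nlinarith
      · simp [hb]
      · exact absurd (by rw [show negB v' w = -b from rfl, show negB v w = -a from rfl,
          Real.sign_of_neg (by linarith), Real.sign_of_neg (by linarith)]) hne
  have hab' : a - b ≠ 0 := by
    rcases ha.lt_or_gt with hlt | hgt
    · have hb : 0 ≤ b := by nlinarith
      intro h0; nlinarith
    · have hb : b ≤ 0 := by nlinarith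
      intro h0; nlinarith
  set t : ℝ := a / (a - b) with ht_def
  have habs : |t| ≤ 1 := by
    rw [abs_div, div_le_one (abs_pos.mpr hab')]
    have h1 : a^2 ≤ (a-b)^2 := by nlinarith
    calc |a| = Real.sqrt (a^2) := (Real.sqrt_sq_eq_abs a).symm
    _ ≤ Real.sqrt ((a-b)^2) := Real.sqrt_le_sqrt h1
    _ = |a - b| := Real.sqrt_sq_eq_abs _
  have humem : v + t • (v' - v) ∈ {u : Vd d | negB u w = 0} := by
    show negB (v + t • (v' - v)) w = 0
    rw [negB, inner_add_left, inner_smul_left, inner_sub_left]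
    simp only [RCLike.conj_to_real, ← ha_def, ← hb_def]
    rw [ht_def]
    field_simp
    ring
  have hled : infDist v {u : Vd d | negB u w = 0} ≤ ‖v' - v‖ := by
    refine le_trans (infDist_le_dist_of_mem humem) ?_
    rw [dist_eq_norm, show v - (v + t • (v' - v)) = -(t • (v' - v)) by abel, norm_neg,
      norm_smul]
    calc ‖t‖ * ‖v' - v‖ ≤ 1 * ‖v' - v‖ :=
          mul_le_mul_of_nonneg_right (by simpa using habs) (norm_nonneg _)
    _ = ‖v' - v‖ := one_mul _
  linarith

lemma SgnTail.pow_one_add_le (n : ℕ) {s : ℝ} (hs : 0 ≤ s) :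
    (1 + s)^n ≤ 2^n * (1 + s^n) := by
  rcases le_total s 1 with h | h
  · calc (1+s)^n ≤ 2^n := by gcongr <;> linarith
    _ ≤ 2^n * (1 + s^n) := by
          nlinarith [pow_nonneg hs n, pow_pos (show (0:ℝ) < 2 by norm_num) n]
  · calc (1+s)^n ≤ (2*s)^n := by gcongr <;> linarith
    _ = 2^n * s^n := by rw [mul_pow]
    _ ≤ 2^n * (1 + s^n) := by
          nlinarith [pow_pos (show (0:ℝ) < 2 by norm_num) n]

lemma SgnTail.oneDim_tail (d : ℕ) (hd : 1 ≤ d) {D : ℝ} (hD : 1 ≤ D) :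
    ∫ r in Ioi (0:ℝ), r ^ (d - 1) • Set.indicator (Ici D)
        (fun r => 2 * rexp (-(4*π) * r^2)) r
      ≤ 2^d * (1 + Real.Gamma d) / (8*π) * D ^ ((d:ℝ) - 2) * rexp (-(4*π) * D^2) := by
  have hπ : (0:ℝ) < π := pi_pos
  have hD0 : (0:ℝ) < D := by linarith
  set r : ℝ := 8*π*D with hr_def
  have hr1 : (1:ℝ) ≤ r := by nlinarith [pi_gt_three]
  have hr0 : (0:ℝ) < r := by linarith
  have hΓ : (0:ℝ) < Real.Gamma d := Real.Gamma_pos_of_pos (by exact_mod_cast hd)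
  have h1 : (fun x : ℝ => x ^ (d - 1) • Set.indicator (Ici D)
      (fun y => 2 * rexp (-(4*π) * y^2)) x)
      = Set.indicator (Ici D) (fun x => x ^ (d-1) * (2 * rexp (-(4*π) * x^2))) := by
    ext x
    by_cases h : x ∈ Ici D
    · simp [Set.indicator_of_mem h, smul_eq_mul]
    · simp [Set.indicator_of_notMem h]
  rw [h1, setIntegral_indicator measurableSet_Ici,
    show Ioi (0:ℝ) ∩ Ici D = Ici D from Set.inter_eq_right.mpr
      (fun x hx => lt_of_lt_of_le hD0 hx)]
  have h2 : ∫ x in Ici D, x ^ (d-1) * (2 * rexp (-(4*π) * x^2))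
      = ∫ s in Ici (0:ℝ), (s+D) ^ (d-1) * (2 * rexp (-(4*π) * (s+D)^2)) := by
    have hmp := measurePreserving_add_right (volume : Measure ℝ) D
    have h3 := hmp.setIntegral_preimage_emb
      (MeasurableEquiv.addRight D).measurableEmbedding
      (fun x => x ^ (d-1) * (2 * rexp (-(4*π) * x^2))) (Ici D)
    have hpre : (fun x : ℝ => x + D) ⁻¹' (Ici D) = Ici 0 := by ext x; simp
    rw [hpre] at h3
    simpa using h3.symm
  rw [h2, integral_Ici_eq_integral_Ioi]
  set c1 : ℝ := 2^d * D^(d-1) * rexp (-(4*π) * D^2) with hc1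
  have hc1pos : 0 < c1 := by positivity
  have hint1 : IntegrableOn (fun s : ℝ => rexp (-(r * s))) (Ioi 0) := by
    have h := exp_neg_integrableOn_Ioi 0 hr0
    exact h.congr_fun (fun x _ => by simp only [neg_mul]) measurableSet_Ioi
  have hint2 : IntegrableOn (fun s : ℝ => s^(d-1) * rexp (-(r * s))) (Ioi 0) := by
    have hcast : ((d:ℝ) - 1) = ((d-1 : ℕ) : ℝ) := by
      push_cast [Nat.cast_sub hd]; ring
    have h := integrableOn_rpow_mul_exp_neg_mul_rpow
      (show (-1:ℝ) < (d:ℝ) - 1 by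
        have h' : (1:ℝ) ≤ (d:ℝ) := by exact_mod_cast hd
        linarith) one_pos hr0
    refine h.congr_fun (fun x hx => ?_) measurableSet_Ioi
    beta_reduce
    rw [Real.rpow_one, hcast, Real.rpow_natCast, neg_mul]
  have hintg : IntegrableOn (fun s : ℝ => c1 * ((1 + s^(d-1)) * rexp (-(r * s))))
      (Ioi 0) := by
    apply Integrable.const_mul
    have h : (fun s : ℝ => (1 + s^(d-1)) * rexp (-(r * s)))
        = (fun s : ℝ => rexp (-(r * s)) + s^(d-1) * rexp (-(r * s))) := by
      ext s; ring
    rw [h]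
    exact hint1.add hint2
  have hmono : ∫ s in Ioi (0:ℝ), (s+D) ^ (d-1) * (2 * rexp (-(4*π) * (s+D)^2))
      ≤ ∫ s in Ioi (0:ℝ), c1 * ((1 + s^(d-1)) * rexp (-(r * s))) := by
    apply integral_mono_of_nonneg
    · filter_upwards [ae_restrict_mem measurableSet_Ioi] with s hs
      have hs' : (0:ℝ) < s := hs
      positivity
    · exact hintg
    · filter_upwards [ae_restrict_mem measurableSet_Ioi] with s hs
      have hs0 : (0:ℝ) ≤ s := le_of_lt hs
      have hpow : (s+D) ^ (d-1) ≤ D^(d-1) * (2^(d-1) * (1 + s^(d-1))) := by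
        calc (s+D) ^ (d-1) ≤ (D*(1+s))^(d-1) := by gcongr <;> nlinarith
        _ = D^(d-1) * (1+s)^(d-1) := by rw [mul_pow]
        _ ≤ D^(d-1) * (2^(d-1) * (1 + s^(d-1))) := by
              have h := SgnTail.pow_one_add_le (d-1) hs0
              have hDp : (0:ℝ) ≤ D^(d-1) := by positivity
              nlinarith
      have hexp : rexp (-(4*π) * (s+D)^2) ≤ rexp (-(4*π) * D^2) * rexp (-(r * s)) := by
        rw [← Real.exp_add, Real.exp_le_exp, hr_def]
        nlinarith [mul_nonneg hπ.le (sq_nonneg s)]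
      calc (s+D) ^ (d-1) * (2 * rexp (-(4*π) * (s+D)^2))
          ≤ (D^(d-1) * (2^(d-1) * (1 + s^(d-1)))) *
              (2 * (rexp (-(4*π) * D^2) * rexp (-(r * s)))) := by
            have hnn : (0:ℝ) ≤ (s+D) ^ (d-1) := by positivity
            apply mul_le_mul hpow _ (by positivity) (by positivity)
            nlinarith [Real.exp_pos (-(4*π) * (s+D)^2), Real.exp_pos (-(4*π) * D^2),
              Real.exp_pos (-(r*s))]
      _ = c1 * ((1 + s^(d-1)) * rexp (-(r * s))) := by
            rw [hc1, show (2:ℝ)^d = 2 * 2^(d-1) by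
              rw [← pow_succ']; congr 1; omega]
            ring
  have hA : ∫ s in Ioi (0:ℝ), rexp (-(r * s)) = (1/r) ^ (1:ℝ) * Real.Gamma 1 := by
    rw [← Real.integral_rpow_mul_exp_neg_mul_Ioi one_pos hr0]
    refine setIntegral_congr_fun measurableSet_Ioi (fun x hx => ?_)
    norm_num
  have hB : ∫ s in Ioi (0:ℝ), s^(d-1) * rexp (-(r * s))
      = (1/r) ^ ((d:ℝ)) * Real.Gamma d := by
    rw [← Real.integral_rpow_mul_exp_neg_mul_Ioi
      (show (0:ℝ) < (d:ℝ) by exact_mod_cast hd) hr0]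
    refine setIntegral_congr_fun measurableSet_Ioi (fun x hx => ?_)
    have hcast : ((d:ℝ) - 1) = ((d-1 : ℕ) : ℝ) := by push_cast [Nat.cast_sub hd]; ring
    rw [hcast, Real.rpow_natCast]
  have hval : ∫ s in Ioi (0:ℝ), c1 * ((1 + s^(d-1)) * rexp (-(r * s)))
      = c1 * ((1/r) ^ (1:ℝ) * Real.Gamma 1 + (1/r) ^ ((d:ℝ)) * Real.Gamma d) := by
    rw [integral_const_mul]
    congr 1
    have h : (fun s : ℝ => (1 + s^(d-1)) * rexp (-(r * s)))
        = (fun s : ℝ => rexp (-(r * s)) + s^(d-1) * rexp (-(r * s))) := by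
      ext s; ring
    rw [h, integral_add hint1 hint2, hA, hB]
  have hrp : (1/r) ^ ((d:ℝ)) ≤ 1/r := by
    have h := Real.rpow_le_rpow_of_exponent_ge (x := 1/r)
      (by positivity) (by rw [div_le_one hr0]; exact hr1)
      (show (1:ℝ) ≤ (d:ℝ) by exact_mod_cast hd)
    simpa using h
  have hDrp : D ^ ((d:ℝ) - 2) * D = D^(d-1:ℕ) := by
    have h : D^(d-1:ℕ) = D ^ ((d:ℝ) - 1) := by
      rw [← Real.rpow_natCast D (d-1)]
      congr 1
      push_cast [Nat.cast_sub hd]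
      ring
    rw [h, show ((d:ℝ)-1) = ((d:ℝ)-2) + 1 by ring, Real.rpow_add hD0, Real.rpow_one]
  calc ∫ s in Ioi (0:ℝ), (s+D) ^ (d-1) * (2 * rexp (-(4*π) * (s+D)^2))
      ≤ c1 * ((1/r) ^ (1:ℝ) * Real.Gamma 1 + (1/r) ^ ((d:ℝ)) * Real.Gamma d) := by
        rw [← hval]; exact hmono
  _ ≤ c1 * ((1/r) * 1 + (1/r) * Real.Gamma d) := by
        rw [Real.Gamma_one, Real.rpow_one, mul_one]
        exact mul_le_mul_of_nonneg_left
          (add_le_add_right (mul_le_mul_of_nonneg_right hrp hΓ.le) _) hc1pos.le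
  _ = 2^d * (1 + Real.Gamma d) / (8*π) * D ^ ((d:ℝ) - 2) * rexp (-(4*π) * D^2) := by
        rw [hc1, ← hDrp, hr_def]
        field_simp

lemma SgnTail.multi_tail (d : ℕ) (hd : 1 ≤ d) {D : ℝ} (hD : 1 ≤ D) :
    ∫ u : Vd d, Set.indicator {u : Vd d | D ≤ ‖u‖}
        (fun u => 2 * rexp (-(4*π) * ‖u‖^2)) u
      ≤ ((d : ℝ) * (volume (Metric.ball (0 : Vd d) 1)).toReal *
          (2^d * (1 + Real.Gamma d) / (8*π))) * D ^ ((d:ℝ) - 2) * rexp (-(4*π) * D^2) := by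
  haveI : Nontrivial (Vd d) := Module.nontrivial_of_finrank_pos (R := ℝ)
    (by rw [finrank_euclideanSpace_fin]; omega)
  have h1 : (fun u : Vd d => Set.indicator {u : Vd d | D ≤ ‖u‖}
      (fun u => 2 * rexp (-(4*π) * ‖u‖^2)) u)
      = fun u : Vd d => Set.indicator (Ici D) (fun t => 2 * rexp (-(4*π) * t^2)) ‖u‖ := by
    ext u
    by_cases h : D ≤ ‖u‖
    · rw [Set.indicator_of_mem (show u ∈ {u : Vd d | D ≤ ‖u‖} from h),
        Set.indicator_of_mem (show ‖u‖ ∈ Ici D from h)]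
    · rw [Set.indicator_of_notMem (show u ∉ {u : Vd d | D ≤ ‖u‖} from h),
        Set.indicator_of_notMem (show ‖u‖ ∉ Ici D from h)]
  rw [h1, integral_fun_norm_addHaar (volume : Measure (Vd d))
    (fun t => Set.indicator (Ici D) (fun y => 2 * rexp (-(4*π) * y^2)) t),
    finrank_euclideanSpace_fin, nsmul_eq_mul, smul_eq_mul, ← mul_assoc]
  have h1d := SgnTail.oneDim_tail d hd hD
  calc ((d : ℝ) * (volume (Metric.ball (0 : Vd d) 1)).toReal) *
        ∫ y in Ioi (0:ℝ), y ^ (d-1) • Set.indicator (Ici D)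
          (fun t => 2 * rexp (-(4*π) * t^2)) y
      ≤ ((d : ℝ) * (volume (Metric.ball (0 : Vd d) 1)).toReal) *
        (2^d * (1 + Real.Gamma d) / (8*π) * D ^ ((d:ℝ) - 2) * rexp (-(4*π) * D^2)) :=
        mul_le_mul_of_nonneg_left h1d (by positivity)
  _ = ((d : ℝ) * (volume (Metric.ball (0 : Vd d) 1)).toReal *
        (2^d * (1 + Real.Gamma d) / (8*π))) * D ^ ((d:ℝ) - 2) * rexp (-(4*π) * D^2) := by
        ring

end AuxiliaryLemmas

/-- away from the walls, the smoothed sign converges square-exponentially to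
the sign product: with `D = min_{w∈E} dist(v, w^⊥) ≥ 1` and `⟨v,w⟩ ≠ 0` for all `w ∈ E`,
`|ŝgn_E(v) − sgn_E(v)| ≪ D^(d−2) exp(−4πD²)`. -/
theorem smoothSgn_sub_sgn_tail (d : ℕ) (E : Finset (EuclideanSpace ℝ (Fin d)))
    (hE : E.Nonempty) :
    ∃ C : ℝ, 0 < C ∧ ∀ v : EuclideanSpace ℝ (Fin d),
      (∀ w ∈ E, negB v w ≠ 0) →
      1 ≤ E.inf' hE (fun w => Metric.infDist v {u : EuclideanSpace ℝ (Fin d) | negB u w = 0}) →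
      |smoothSgn E v - sgnProd E v| ≤
        C * (E.inf' hE fun w =>
              Metric.infDist v {u : EuclideanSpace ℝ (Fin d) | negB u w = 0}) ^ ((d : ℝ) - 2) *
          Real.exp (-(4 * π) *
            (E.inf' hE fun w =>
              Metric.infDist v {u : EuclideanSpace ℝ (Fin d) | negB u w = 0}) ^ 2) := by
  classical
  rcases Nat.eq_zero_or_pos d with hd0 | hd
  · obtain ⟨w, hw⟩ := hE
    subst hd0
    exact ⟨1, one_pos, fun v hv _ => absurd (hv w hw)
      (by simp [negB, Subsingleton.elim v 0])⟩
  set I : ℝ := ∫ u : EuclideanSpace ℝ (Fin d), rexp (-(4*π) * ‖u‖^2) with hI_def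
  have hI : 0 < I := SgnTail.gauss_integral_pos d
  set Cd : ℝ := (d : ℝ) * (volume (Metric.ball (0 : EuclideanSpace ℝ (Fin d)) 1)).toReal *
      (2^d * (1 + Real.Gamma d) / (8*π)) with hCd
  have hΓ : (0:ℝ) < Real.Gamma d := Real.Gamma_pos_of_pos (by exact_mod_cast hd)
  have hCd0 : 0 ≤ Cd := by positivity
  refine ⟨Cd / I + 1, by positivity, fun v hv hD1 => ?_⟩
  set D : ℝ := E.inf' hE
    (fun w => Metric.infDist v {u : EuclideanSpace ℝ (Fin d) | negB u w = 0}) with hD_def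
  have hD0 : (0:ℝ) < D := lt_of_lt_of_le one_pos hD1
  -- the translated Gaussian
  have hgv : Integrable
      (fun v' : EuclideanSpace ℝ (Fin d) => rexp (-(4*π) * ‖v' - v‖^2)) := by
    exact ((measurePreserving_sub_right
        (volume : Measure (EuclideanSpace ℝ (Fin d))) v).integrable_comp_emb
      (MeasurableEquiv.subRight v).measurableEmbedding).mpr (SgnTail.integrable_gauss d)
  have hIv : (∫ v' : EuclideanSpace ℝ (Fin d), rexp (-(4*π) * ‖v' - v‖^2)) = I :=
    integral_sub_right_eq_self (fun u => rexp (-(4*π) * ‖u‖^2)) v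
  have hnum : Integrable (fun v' : EuclideanSpace ℝ (Fin d) =>
      sgnProd E v' * rexp (-(4*π) * ‖v' - v‖^2)) :=
    hgv.bdd_mul (c := 1) (SgnTail.measurable_sgnProd E).aestronglyMeasurable
      (Filter.Eventually.of_forall fun v' => by rw [Real.norm_eq_abs]; exact SgnTail.abs_sgnProd_le_one E v')
  -- the dominating indicator function
  set S : Set (EuclideanSpace ℝ (Fin d)) := {u | D ≤ ‖u - v‖} with hS_def
  have hSmeas : MeasurableSet S :=
    (isClosed_le continuous_const ((continuous_id.sub continuous_const).norm)).measurableSet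
  set B : EuclideanSpace ℝ (Fin d) → ℝ :=
    Set.indicator S (fun v' => 2 * rexp (-(4*π) * ‖v' - v‖^2)) with hB_def
  have hBint : Integrable B := ((hgv.const_mul 2).indicator hSmeas)
  have hptwise : ∀ v' : EuclideanSpace ℝ (Fin d),
      ‖(sgnProd E v' - sgnProd E v) * rexp (-(4*π) * ‖v' - v‖^2)‖ ≤ B v' := by
    intro v'
    by_cases h : D ≤ ‖v' - v‖
    · rw [hB_def, Set.indicator_of_mem (show v' ∈ S from h)]
      rw [Real.norm_eq_abs, abs_mul, abs_of_pos (Real.exp_pos _)]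
      have h1 := abs_le.mp (SgnTail.abs_sgnProd_le_one E v')
      have h2 := abs_le.mp (SgnTail.abs_sgnProd_le_one E v)
      have h3 : |sgnProd E v' - sgnProd E v| ≤ 2 :=
        abs_le.mpr ⟨by linarith [h1.1, h2.2], by linarith [h1.2, h2.1]⟩
      nlinarith [Real.exp_pos (-(4*π) * ‖v' - v‖^2)]
    · rw [hB_def, Set.indicator_of_notMem (show v' ∉ S from h)]
      have heq : sgnProd E v' = sgnProd E v := by
        unfold sgnProd
        refine Finset.prod_congr rfl fun w hw => ?_
        refine SgnTail.sign_eq_of_close (hv w hw) ?_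
        have hDle : D ≤ Metric.infDist v
            {u : EuclideanSpace ℝ (Fin d) | negB u w = 0} := by
          rw [hD_def]
          exact Finset.inf'_le _ hw
        push_neg at h
        linarith
      simp [heq]
  have hF0 : B = fun v' => Set.indicator {u : EuclideanSpace ℝ (Fin d) | D ≤ ‖u‖}
      (fun u => 2 * rexp (-(4*π) * ‖u‖^2)) (v' - v) := by
    ext v'
    by_cases h : D ≤ ‖v' - v‖
    · rw [hB_def, Set.indicator_of_mem (show v' ∈ S from h),
        Set.indicator_of_mem
          (show v' - v ∈ {u : EuclideanSpace ℝ (Fin d) | D ≤ ‖u‖} from h)]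
    · rw [hB_def, Set.indicator_of_notMem (show v' ∉ S from h),
        Set.indicator_of_notMem
          (show v' - v ∉ {u : EuclideanSpace ℝ (Fin d) | D ≤ ‖u‖} from h)]
  have hBval : ∫ v', B v' ≤ Cd * D ^ ((d:ℝ) - 2) * rexp (-(4*π) * D^2) := by
    rw [hF0, integral_sub_right_eq_self
      (Set.indicator {u : EuclideanSpace ℝ (Fin d) | D ≤ ‖u‖}
        (fun u => 2 * rexp (-(4*π) * ‖u‖^2))) v]
    exact SgnTail.multi_tail d hd hD1
  -- the key difference identity
  have hsplit : ∫ v' : EuclideanSpace ℝ (Fin d),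
      (sgnProd E v' - sgnProd E v) * rexp (-(4*π) * ‖v' - v‖^2)
      = (∫ v' : EuclideanSpace ℝ (Fin d), sgnProd E v' * rexp (-(4*π) * ‖v' - v‖^2))
        - sgnProd E v * I := by
    have h : (fun v' : EuclideanSpace ℝ (Fin d) =>
        (sgnProd E v' - sgnProd E v) * rexp (-(4*π) * ‖v' - v‖^2))
        = fun v' => sgnProd E v' * rexp (-(4*π) * ‖v' - v‖^2)
            - sgnProd E v * rexp (-(4*π) * ‖v' - v‖^2) := by
      ext v'; ring
    rw [h, integral_sub hnum (hgv.const_mul _), integral_const_mul, hIv]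
  have hidentity : smoothSgn E v - sgnProd E v
      = (∫ v' : EuclideanSpace ℝ (Fin d),
          (sgnProd E v' - sgnProd E v) * rexp (-(4*π) * ‖v' - v‖^2)) / I := by
    rw [hsplit]
    have hs : smoothSgn E v = (∫ v' : EuclideanSpace ℝ (Fin d),
        sgnProd E v' * rexp (-(4*π) * ‖v' - v‖^2)) / I := rfl
    rw [hs, sub_div, mul_div_assoc, div_self hI.ne', mul_one]
  have hkey : |∫ v' : EuclideanSpace ℝ (Fin d),
      (sgnProd E v' - sgnProd E v) * rexp (-(4*π) * ‖v' - v‖^2)|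
      ≤ Cd * D ^ ((d:ℝ) - 2) * rexp (-(4*π) * D^2) := by
    have h1 : |∫ v' : EuclideanSpace ℝ (Fin d),
        (sgnProd E v' - sgnProd E v) * rexp (-(4*π) * ‖v' - v‖^2)|
        ≤ ∫ v' : EuclideanSpace ℝ (Fin d),
          ‖(sgnProd E v' - sgnProd E v) * rexp (-(4*π) * ‖v' - v‖^2)‖ := by
      have h := norm_integral_le_integral_norm
        (μ := (volume : Measure (EuclideanSpace ℝ (Fin d))))
        (fun v' : EuclideanSpace ℝ (Fin d) =>
          (sgnProd E v' - sgnProd E v) * rexp (-(4*π) * ‖v' - v‖^2))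
      rwa [Real.norm_eq_abs] at h
    have h2 : ∫ v' : EuclideanSpace ℝ (Fin d),
        ‖(sgnProd E v' - sgnProd E v) * rexp (-(4*π) * ‖v' - v‖^2)‖
        ≤ ∫ v', B v' :=
      integral_mono_of_nonneg (Filter.Eventually.of_forall fun v' => norm_nonneg _)
        hBint (Filter.Eventually.of_forall hptwise)
    linarith
  calc |smoothSgn E v - sgnProd E v|
      = |∫ v' : EuclideanSpace ℝ (Fin d),
          (sgnProd E v' - sgnProd E v) * rexp (-(4*π) * ‖v' - v‖^2)| / I := by
        rw [hidentity, abs_div, abs_of_pos hI]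
  _ ≤ (Cd * D ^ ((d:ℝ) - 2) * rexp (-(4*π) * D^2)) / I := by gcongr
  _ = (Cd / I) * D ^ ((d:ℝ) - 2) * rexp (-(4*π) * D^2) := by ring
  _ ≤ (Cd / I + 1) * D ^ ((d:ℝ) - 2) * rexp (-(4*π) * D^2) := by
        have hx : (0:ℝ) ≤ D ^ ((d:ℝ) - 2) := (Real.rpow_pos_of_pos hD0 _).le
        have hy : (0:ℝ) ≤ rexp (-(4*π) * D^2) := (Real.exp_pos _).le
        nlinarith [div_nonneg hCd0 hI.le]
  _ = (Cd / I + 1) * D ^ ((d:ℝ) - 2) * Real.exp (-(4 * π) * D ^ 2) := by norm_num
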